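/- arXiv:2303.06829 — 5 statements merged into one kernel-verified Lean document; each statement's English description precedes it below -/
import Mathlib

section
/- Let φ : ℕ → ℕ be injective with φ^m having no fixed point for every m ≥ 1. Then for every k ∈ ℕ and n ≥ 1, the φ bi-orbit of k decomposes as the disjoint union A_{1,k} = ⋃_{i=0}^{n-1} A_{n,φ^i(k)}, and the sets A_{n,φ^i(k)} for 0 ≤ i ≤ n−1 are pairwise disjoint. -/
/-- The `φ^n` bi-orbit of `k`: the set of points lying on the same
forward/backward `φ^n`-orbit as `k`. -/
def biOrbit (φ : ℕ → ℕ) (n k : ℕ) : Set ℕ :=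
  {m : ℕ | ∃ a b : ℕ, φ^[a * n] m = φ^[b * n] k}

private lemma iter_cancel_aux (φ : ℕ → ℕ) (hinj : Function.Injective φ)
    (hfix : ∀ m : ℕ, 1 ≤ m → ∀ k : ℕ, φ^[m] k ≠ k) {k p q : ℕ}
    (h : φ^[p] k = φ^[q] k) (hle : p ≤ q) : p = q := by
  by_contra hne
  have h1 : φ^[p] (φ^[q - p] k) = φ^[p] k := by
    rw [← Function.iterate_add_apply]
    have : p + (q - p) = q := by omega
    rw [this, h]
  have h2 : φ^[q - p] k = k := (hinj.iterate p) h1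
  exact hfix (q - p) (by omega) k h2

private lemma iter_cancel (φ : ℕ → ℕ) (hinj : Function.Injective φ)
    (hfix : ∀ m : ℕ, 1 ≤ m → ∀ k : ℕ, φ^[m] k ≠ k) {k p q : ℕ}
    (h : φ^[p] k = φ^[q] k) : p = q := by
  rcases le_total p q with hle | hle
  · exact iter_cancel_aux φ hinj hfix h hle
  · exact (iter_cancel_aux φ hinj hfix h.symm hle).symm

theorem biOrbit_decomposition (φ : ℕ → ℕ) (hinj : Function.Injective φ)
    (hfix : ∀ m : ℕ, 1 ≤ m → ∀ k : ℕ, φ^[m] k ≠ k) (k n : ℕ) (hn : 1 ≤ n) :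
    (biOrbit φ 1 k = ⋃ i ∈ Finset.range n, biOrbit φ n (φ^[i] k)) ∧
    (∀ i : ℕ, i < n → ∀ j : ℕ, j < n → i ≠ j →
      biOrbit φ n (φ^[i] k) ∩ biOrbit φ n (φ^[j] k) = ∅) := by
  obtain ⟨n', rfl⟩ : ∃ n', n = n' + 1 := ⟨n - 1, by omega⟩
  set N := n' + 1 with hN
  constructor
  · ext m
    simp only [biOrbit, Set.mem_setOf_eq, Set.mem_iUnion, Finset.mem_range]
    constructor
    · rintro ⟨a, b, h⟩
      simp only [mul_one] at h
      refine ⟨(b + a * n') % N, Nat.mod_lt _ (by omega), a, (b + a * n') / N, ?_⟩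
      have h2 : φ^[a * n'] (φ^[a] m) = φ^[a * n'] (φ^[b] k) := by rw [h]
      rw [← Function.iterate_add_apply, ← Function.iterate_add_apply] at h2
      rw [← Function.iterate_add_apply]
      have e1 : a * n' + a = a * N := by rw [hN]; ring
      have hdm := Nat.div_add_mod (b + a * n') N
      have e2 : (b + a * n') / N * N + (b + a * n') % N = b + a * n' := by
        rw [Nat.mul_comm]; omega
      rw [e1, Nat.add_comm (a * n') b] at h2
      rw [e2]
      exact h2
    · rintro ⟨i, hi, a, b, h⟩
      refine ⟨a * N, b * N + i, ?_⟩
      simp only [mul_one]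
      rw [h, ← Function.iterate_add_apply]
  · intro i hi j hj hij
    ext m
    simp only [Set.mem_inter_iff, Set.mem_empty_iff_false, iff_false, not_and]
    rintro ⟨a, b, h1⟩ ⟨c, d, h2⟩
    rw [← Function.iterate_add_apply] at h1 h2
    have h3 : φ^[c * N] (φ^[a * N] m) = φ^[c * N] (φ^[b * N + i] k) := by rw [h1]
    have h4 : φ^[a * N] (φ^[c * N] m) = φ^[a * N] (φ^[d * N + j] k) := by rw [h2]
    rw [← Function.iterate_add_apply, ← Function.iterate_add_apply] at h3 h4
    have h5 : φ^[c * N + (b * N + i)] k = φ^[a * N + (d * N + j)] k := by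
      rw [← h3, ← h4]
      congr 1
      omega
    have h6 := iter_cancel φ hinj hfix h5
    have e3 : c * N + (b * N + i) = N * (c + b) + i := by ring
    have e4 : a * N + (d * N + j) = N * (a + d) + j := by ring
    rw [e3, e4] at h6
    have : (N * (c + b) + i) % N = (N * (a + d) + j) % N := by rw [h6]
    rw [Nat.mul_add_mod, Nat.mul_add_mod] at this
    rw [Nat.mod_eq_of_lt hi, Nat.mod_eq_of_lt hj] at this
    exact hij this
end

section
/- Let φ : ℕ → ℕ be injective with φ^m having no fixed point for every m ≥ 1. Then for every finite set F ⊆ ℕ and every k ∈ ℕ there exists N ∈ ℕ such that for all n > N, B_{n,k} ∩ F = ∅, where B_{n,k} = {m ∈ ℕ : ∃ i ≥ 1, φ^{in}(k) = m or φ^{in}(m) = k} is the punctured φ^n bi-orbit of k. -/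
/-- The punctured `φ^n` bi-orbit of `k`. -/
def puncturedBiOrbit (φ : ℕ → ℕ) (n k : ℕ) : Set ℕ :=
  {m : ℕ | ∃ i : ℕ, 1 ≤ i ∧ (φ^[i * n] k = m ∨ φ^[i * n] m = k)}

lemma iter_time_inj (φ : ℕ → ℕ) (hinj : Function.Injective φ)
    (hfix : ∀ m : ℕ, 1 ≤ m → ∀ k : ℕ, φ^[m] k ≠ k) :
    ∀ x a b : ℕ, φ^[a] x = φ^[b] x → a = b := by
  have key : ∀ a b : ℕ, a ≤ b → ∀ x, φ^[a] x = φ^[b] x → a = b := by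
    intro a b hab x h
    obtain ⟨c, rfl⟩ := Nat.exists_eq_add_of_le hab
    have : φ^[a] (φ^[c] x) = φ^[a] x := by
      rw [← Function.iterate_add_apply]
      exact h.symm
    have hc : φ^[c] x = x := (Function.Injective.iterate hinj a) this
    rcases Nat.eq_zero_or_pos c with rfl | hcp
    · simp
    · exact absurd hc (hfix c hcp x)
  intro x a b h
  rcases le_total a b with hab | hab
  · exact key a b hab x h
  · exact (key b a hab x h.symm).symm

theorem puncturedBiOrbit_escapes_finite_sets (φ : ℕ → ℕ) (hinj : Function.Injective φ)
    (hfix : ∀ m : ℕ, 1 ≤ m → ∀ k : ℕ, φ^[m] k ≠ k) :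
    ∀ F : Set ℕ, F.Finite → ∀ k : ℕ, ∃ N : ℕ, ∀ n : ℕ, N < n →
      puncturedBiOrbit φ n k ∩ F = ∅ := by
  intro F hF k
  have tinj := iter_time_inj φ hinj hfix
  -- the set of times j at which the orbit of k meets F, or some m ∈ F hits k
  set T : Set ℕ := {j : ℕ | φ^[j] k ∈ F ∨ ∃ m ∈ F, φ^[j] m = k} with hT
  have hT1 : ((fun j => φ^[j] k) ⁻¹' F).Finite :=
    hF.preimage (fun a _ b _ h => tinj k a b h)
  have hT2 : (⋃ m ∈ F, {j : ℕ | φ^[j] m = k}).Finite := by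
    apply Set.Finite.biUnion hF
    intro m _
    apply Set.Subsingleton.finite
    intro a ha b hb
    exact tinj m a b (ha.trans hb.symm)
  have hTfin : T.Finite := by
    apply (hT1.union hT2).subset
    intro j hj
    rcases hj with h | ⟨m, hm, hmk⟩
    · exact Or.inl h
    · exact Or.inr (Set.mem_biUnion hm hmk)
  obtain ⟨N, hN⟩ := hTfin.bddAbove
  refine ⟨N, fun n hn => ?_⟩
  ext m
  simp only [Set.mem_inter_iff, Set.mem_empty_iff_false, iff_false, not_and]
  rintro ⟨i, hi, hcase⟩ hmF
  have hjT : i * n ∈ T := by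
    rcases hcase with h | h
    · exact Or.inl (h ▸ hmF)
    · exact Or.inr ⟨m, hmF, h⟩
  have : i * n ≤ N := hN hjT
  have : n ≤ i * n := Nat.le_mul_of_pos_left n hi
  omega
end

section
/- Let 1 ≤ p < ∞, let w : ℕ → ℂ, and let φ : ℕ → ℕ be injective with φ^n having no fixed point for every n ≥ 1. Then the set ⋂_{n≥1} D((wC_φ)^n) = {x ∈ ℓ^p(ℕ,ℂ) : for every n ≥ 1, the sequence k ↦ (∏_{i=0}^{n-1} w(φ^i(k)))·x(φ^n(k)) lies in ℓ^p(ℕ,ℂ)} is dense in ℓ^p(ℕ,ℂ). -/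
open scoped ENNReal

/-- The `n`-th iterate of the weighted pseudo-shift `wC_φ` applied to a sequence `x`:
`k ↦ (∏_{i=0}^{n-1} w(φ^i(k))) · x(φ^n(k))`. -/
def pseudoShiftIter (w : ℕ → ℂ) (φ : ℕ → ℕ) (n : ℕ) (x : ℕ → ℂ) : ℕ → ℂ :=
  fun k => (∏ i ∈ Finset.range n, w (φ^[i] k)) * x (φ^[n] k)

lemma memℓp_of_finite_support {p : ℝ≥0∞} {f : ℕ → ℂ}
    (hf : (Function.support f).Finite) : Memℓp f p := by
  rcases eq_or_ne p 0 with rfl | hp0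
  · exact memℓp_zero hf
  rcases eq_or_ne p ⊤ with rfl | hpt
  · apply memℓp_infty
    rcases hf.exists_finset_coe with ⟨s, hs⟩
    refine ⟨∑ i ∈ s, ‖f i‖, ?_⟩
    rintro x ⟨i, rfl⟩
    by_cases hi : i ∈ s
    · exact Finset.single_le_sum (fun j _ => norm_nonneg _) hi
    · have h0 : f i = 0 := by
        by_contra h
        exact hi (by rw [← Finset.mem_coe, hs]; exact h)
      simp only [h0, norm_zero]
      exact Finset.sum_nonneg fun j _ => norm_nonneg _
  · apply memℓp_gen
    apply summable_of_finite_support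
    apply hf.subset
    intro i hi
    simp only [Function.mem_support] at hi ⊢
    intro h
    apply hi
    rw [h, norm_zero]
    exact Real.zero_rpow (ENNReal.toReal_pos hp0 hpt).ne'

theorem dense_inter_domains_pseudoShift (p : ℝ≥0∞) [Fact (1 ≤ p)] (hp' : p ≠ ⊤)
    (w : ℕ → ℂ) (φ : ℕ → ℕ) (hinj : Function.Injective φ)
    (hfix : ∀ n : ℕ, 1 ≤ n → ∀ k : ℕ, φ^[n] k ≠ k) :
    Dense {x : lp (fun _ : ℕ => ℂ) p |
      ∀ n : ℕ, 1 ≤ n → Memℓp (pseudoShiftIter w φ n ⇑x) p} := by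
  rw [dense_iff_closure_eq, Set.eq_univ_iff_forall]
  intro f
  have hsum := lp.hasSum_single hp' f
  refine mem_closure_of_tendsto hsum (Filter.Eventually.of_forall ?_)
  intro s
  intro n hn
  apply memℓp_of_finite_support
  have hcoe : ∀ k, (((∑ i ∈ s, lp.single p i (f i : ℂ)) : lp (fun _ : ℕ => ℂ) p) : ℕ → ℂ) k
      = if k ∈ s then f k else 0 := by
    intro k
    rw [lp.coeFn_sum, Finset.sum_apply]
    simp [lp.single_apply, Finset.sum_dite_eq']
  refine Set.Finite.subset ((s : Set ℕ).toFinite.preimage (hinj.iterate n).injOn) ?_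
  intro k hk
  simp only [Function.mem_support, pseudoShiftIter] at hk
  have h2 : (((∑ i ∈ s, lp.single p i (f i : ℂ)) : lp (fun _ : ℕ => ℂ) p) : ℕ → ℂ) (φ^[n] k) ≠ 0 := by
    intro h
    apply hk
    rw [lp.coeFn_sum] at h ⊢
    rw [h, mul_zero]
  rw [hcoe] at h2
  by_contra hmem
  simp only [Set.mem_preimage, Finset.mem_coe] at hmem
  rw [if_neg hmem] at h2
  exact h2 rfl
end

section
/- Let 1 ≤ p < ∞, let w : ℕ → ℂ satisfy w(n) ≠ 0 for all n ∈ ℕ, and let φ : ℕ → ℕ. If the weighted pseudo-shift wC_φ is hypercyclic on ℓ^p(ℕ,ℂ), then φ is injective. -/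
set_option synthInstance.maxHeartbeats 1000000
set_option maxHeartbeats 1000000


open scoped ENNReal

/-- The weighted pseudo-shift `wC_φ` is hypercyclic on `ℓ^p(ℕ, ℂ)`: there is a vector `x`
lying in the domain of every iterate `(wC_φ)^n` (`n ≥ 1`) whose orbit
`{(wC_φ)^n x : n ≥ 0}` is dense in `ℓ^p(ℕ, ℂ)`. -/
def lpHypercyclic (p : ℝ≥0∞) [Fact (1 ≤ p)] (w : ℕ → ℂ) (φ : ℕ → ℕ) : Prop :=
  ∃ x : lp (fun _ : ℕ => ℂ) p,
    (∀ n : ℕ, 1 ≤ n → Memℓp (pseudoShiftIter w φ n ⇑x) p) ∧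
    Dense {y : lp (fun _ : ℕ => ℂ) p | ∃ n : ℕ, ⇑y = pseudoShiftIter w φ n ⇑x}

theorem injective_of_lpHypercyclic (p : ℝ≥0∞) [Fact (1 ≤ p)] (hp' : p ≠ ⊤)
    (w : ℕ → ℂ) (hw : ∀ n : ℕ, w n ≠ 0) (φ : ℕ → ℕ)
    (h : lpHypercyclic p w φ) : Function.Injective φ := by
  intro a b hab
  by_contra hne
  obtain ⟨x, _hdom, hdense⟩ := h
  have hp0 : p ≠ 0 := by
    have h1 : (1 : ℝ≥0∞) ≤ p := Fact.out
    intro h0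
    rw [h0] at h1
    exact (not_le.mpr (by norm_num : (0:ℝ≥0∞) < 1)) h1
  -- evaluation maps are continuous
  have heval : ∀ i : ℕ, Continuous fun y : lp (fun _ : ℕ => ℂ) p => y i := by
    intro i
    refine (LipschitzWith.of_dist_le_mul (K := 1) fun y z => ?_).continuous
    have h1 : ‖(y - z : lp (fun _ : ℕ => ℂ) p) i‖ ≤ ‖y - z‖ :=
      lp.norm_apply_le_norm hp0 (y - z) i
    rw [lp.coeFn_sub] at h1
    simpa [dist_eq_norm] using h1
  set C : Set (lp (fun _ : ℕ => ℂ) p) := {y | w b * y a = w a * y b} with hC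
  have hclosed : IsClosed (C ∪ {x}) := by
    refine IsClosed.union ?_ isClosed_singleton
    have : C = (fun y : lp (fun _ : ℕ => ℂ) p => w b * y a - w a * y b) ⁻¹' {0} := by
      ext y
      simp [hC, sub_eq_zero]
    rw [this]
    exact IsClosed.preimage (by continuity) isClosed_singleton
  -- iterates for i ≥ 1 agree on a and b
  have hiter : ∀ i : ℕ, φ^[i + 1] a = φ^[i + 1] b := by
    intro i
    rw [Function.iterate_succ_apply, Function.iterate_succ_apply, hab]
  have hsub : {y : lp (fun _ : ℕ => ℂ) p | ∃ n : ℕ, ⇑y = pseudoShiftIter w φ n ⇑x}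
      ⊆ C ∪ {x} := by
    rintro y ⟨n, hy⟩
    rcases n with _ | m
    · right
      have : ⇑y = ⇑x := by
        funext k
        simp [hy, pseudoShiftIter]
      exact lp.ext this
    · left
      have hya : y a = (w a * ∏ i ∈ Finset.range m, w (φ^[i + 1] a)) * x (φ^[m + 1] a) := by
        have := congrFun hy a
        rw [this]
        simp only [pseudoShiftIter]
        rw [Finset.prod_range_succ']
        simp only [Function.iterate_zero_apply]
        ring
      have hyb : y b = (w b * ∏ i ∈ Finset.range m, w (φ^[i + 1] b)) * x (φ^[m + 1] b) := by
        have := congrFun hy b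
        rw [this]
        simp only [pseudoShiftIter]
        rw [Finset.prod_range_succ']
        simp only [Function.iterate_zero_apply]
        ring
      show w b * y a = w a * y b
      rw [hya, hyb]
      have hprod : ∏ i ∈ Finset.range m, w (φ^[i + 1] a)
          = ∏ i ∈ Finset.range m, w (φ^[i + 1] b) :=
        Finset.prod_congr rfl fun i _ => by rw [hiter i]
      rw [hprod, hiter m]
      ring
  have hall : ∀ z : lp (fun _ : ℕ => ℂ) p, z ∈ C ∪ {x} := by
    intro z
    have := hdense.closure_eq
    have hz : z ∈ closure {y : lp (fun _ : ℕ => ℂ) p | ∃ n : ℕ, ⇑y = pseudoShiftIter w φ n ⇑x} := by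
      rw [this]; trivial
    exact closure_minimal hsub hclosed hz
  -- the two test vectors
  have hnotC : ∀ c : ℂ, c ≠ 0 → (lp.single p a c : lp (fun _ : ℕ => ℂ) p) ∉ C := by
    intro c hc hmem
    have h1 : (lp.single p a c : lp (fun _ : ℕ => ℂ) p) a = c := by
      simp [lp.single_apply]
    have h2 : (lp.single p a c : lp (fun _ : ℕ => ℂ) p) b = 0 := by
      simp [lp.single_apply, Ne.symm hne]
    rw [Set.mem_setOf_eq, h1, h2, mul_zero] at hmem
    exact hw b (by
      rcases mul_eq_zero.mp hmem with h | h
      · exact h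
      · exact absurd h hc)
  have h1 := hall (lp.single p a 1)
  have h2 := hall (lp.single p a 2)
  rcases h1 with h1 | h1
  · exact hnotC 1 one_ne_zero h1
  rcases h2 with h2 | h2
  · exact hnotC 2 two_ne_zero h2
  have : (lp.single p a (1:ℂ) : lp (fun _ : ℕ => ℂ) p) = lp.single p a 2 := by
    rw [Set.mem_singleton_iff.mp h1, ← Set.mem_singleton_iff.mp h2]
  have := congrFun (congrArg (fun f : lp (fun _ : ℕ => ℂ) p => ⇑f) this) a
  simp [lp.single_apply] at this
end

section
/- Let 1 ≤ p < ∞, let w : ℕ → ℂ, and let φ : ℕ → ℕ. If the weighted pseudo-shift wC_φ is hypercyclic on ℓ^p(ℕ,ℂ), then for every n ≥ 1 the iterate φ^n has no fixed point: φ^n(l) ≠ l for all l ∈ ℕ. -/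
open scoped ENNReal

theorem no_fixed_point_of_lpHypercyclic (p : ℝ≥0∞) [Fact (1 ≤ p)] (hp' : p ≠ ⊤)
    (w : ℕ → ℂ) (φ : ℕ → ℕ) (h : lpHypercyclic p w φ) :
    ∀ n : ℕ, 1 ≤ n → ∀ l : ℕ, φ^[n] l ≠ l := by
  intro n hn l hfix
  obtain ⟨x, -, hdense⟩ := h
  have hp0 : p ≠ 0 := by
    have : (1 : ℝ≥0∞) ≤ p := Fact.out
    intro hc; simp [hc] at this
  set c : ℕ → ℂ := fun m => pseudoShiftIter w φ m (⇑x) l with hc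
  -- Density at coordinate l
  have hkey : ∀ (t : ℂ) (ε : ℝ), 0 < ε → ∃ m, ‖c m - t‖ < ε := by
    intro t ε hε
    obtain ⟨y, hy1, hy2⟩ := Metric.dense_iff.mp hdense (lp.single p l t) ε hε
    obtain ⟨m, hm⟩ := hy2
    refine ⟨m, ?_⟩
    set z : lp (fun _ : ℕ => ℂ) p := y - lp.single p l t with hz
    have h1 : ‖z l‖ ≤ ‖z‖ := lp.norm_apply_le_norm hp0 z l
    have h2 : z l = c m - t := by
      rw [hz, lp.coeFn_sub, Pi.sub_apply, hm, lp.single_apply_self]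
    have h3 : ‖z‖ < ε := by
      rw [Metric.mem_ball, dist_eq_norm] at hy1
      rw [hz]
      exact hy1
    rw [← h2]
    exact lt_of_le_of_lt h1 h3
  set W : ℂ := ∏ i ∈ Finset.range n, w (φ^[i] l) with hW
  have hiter : ∀ q : ℕ, φ^[n * q] l = l := by
    intro q
    rw [Function.iterate_mul]
    exact Function.iterate_fixed hfix q
  have hshift : ∀ q i : ℕ, φ^[n * q + i] l = φ^[i] l := by
    intro q i
    rw [Nat.add_comm, Function.iterate_add_apply, hiter]
  have hprodW : ∀ q : ℕ, ∏ i ∈ Finset.range (n * q), w (φ^[i] l) = W ^ q := by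
    intro q
    induction q with
    | zero => simp
    | succ q ih =>
      rw [Nat.mul_succ, Finset.prod_range_add, ih, pow_succ]
      congr 1
      exact Finset.prod_congr rfl fun i _ => by rw [hshift]
  have hdec0 : ∀ q r : ℕ, c (n * q + r) = W ^ q * c r := by
    intro q r
    show (∏ i ∈ Finset.range (n * q + r), w (φ^[i] l)) * x (φ^[n * q + r] l)
        = W ^ q * ((∏ i ∈ Finset.range r, w (φ^[i] l)) * x (φ^[r] l))
    rw [Finset.prod_range_add, hprodW, hshift, mul_assoc]
    congr 2
    exact Finset.prod_congr rfl fun i _ => by rw [hshift]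
  have hdecomp : ∀ m : ℕ, ∃ q r, r < n ∧ c m = W ^ q * c r := by
    intro m
    refine ⟨m / n, m % n, Nat.mod_lt _ (by omega), ?_⟩
    conv_lhs => rw [show m = n * (m / n) + m % n from (Nat.div_add_mod m n).symm]
    exact hdec0 _ _
  -- case split on ‖W‖
  rcases le_or_gt ‖W‖ 1 with hWle | hWgt
  · -- bounded orbit values
    set B : ℝ := ∑ r ∈ Finset.range n, ‖c r‖ with hB
    have hBnn : 0 ≤ B := Finset.sum_nonneg fun _ _ => norm_nonneg _
    have hbound : ∀ m, ‖c m‖ ≤ B := by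
      intro m
      obtain ⟨q, r, hr, hcm⟩ := hdecomp m
      rw [hcm, norm_mul, norm_pow]
      calc ‖W‖ ^ q * ‖c r‖ ≤ 1 * ‖c r‖ := by
            apply mul_le_mul_of_nonneg_right _ (norm_nonneg _)
            exact pow_le_one₀ (norm_nonneg _) hWle
        _ = ‖c r‖ := one_mul _
        _ ≤ B := Finset.single_le_sum (f := fun r => ‖c r‖)
              (fun _ _ => norm_nonneg _) (Finset.mem_range.mpr hr)
    obtain ⟨m, hm⟩ := hkey ((B + 1 : ℝ) : ℂ) 1 one_pos
    have : (B + 1 : ℝ) - ‖c m‖ ≤ ‖c m - ((B + 1 : ℝ) : ℂ)‖ := by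
      have := norm_sub_norm_le (((B + 1 : ℝ) : ℂ)) (c m)
      rw [Complex.norm_real, Real.norm_of_nonneg (by linarith)] at this
      rw [norm_sub_rev]
      linarith
    have := hbound m
    linarith
  · -- ‖W‖ > 1 : nonzero values bounded below
    by_cases hall : ∀ r < n, c r = 0
    · have hzero : ∀ m, c m = 0 := by
        intro m
        obtain ⟨q, r, hr, hcm⟩ := hdecomp m
        rw [hcm, hall r hr, mul_zero]
      obtain ⟨m, hm⟩ := hkey 1 (1/2) (by norm_num)
      rw [hzero m] at hm
      simp at hm
      norm_num at hm
    · push_neg at hall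
      obtain ⟨r₀, hr₀, hr₀ne⟩ := hall
      set s : Finset ℕ := (Finset.range n).filter (fun r => c r ≠ 0) with hs
      have hsne : s.Nonempty := ⟨r₀, by simp [hs, hr₀, hr₀ne]⟩
      set ε : ℝ := s.inf' hsne (fun r => ‖c r‖) with hε
      have hεpos : 0 < ε := by
        rw [hε, Finset.lt_inf'_iff]
        intro r hr
        rw [hs, Finset.mem_filter] at hr
        exact norm_pos_iff.mpr hr.2
      have hgap : ∀ m, c m = 0 ∨ ε ≤ ‖c m‖ := by
        intro m
        obtain ⟨q, r, hr, hcm⟩ := hdecomp m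
        by_cases hcr : c r = 0
        · left; rw [hcm, hcr, mul_zero]
        · right
          rw [hcm, norm_mul, norm_pow]
          calc ε ≤ ‖c r‖ := Finset.inf'_le _ (by simp [hs, hr, hcr])
            _ = 1 * ‖c r‖ := (one_mul _).symm
            _ ≤ ‖W‖ ^ q * ‖c r‖ := by
                apply mul_le_mul_of_nonneg_right _ (norm_nonneg _)
                exact one_le_pow₀ hWgt.le
      obtain ⟨m, hm⟩ := hkey ((ε / 2 : ℝ) : ℂ) (ε / 4) (by linarith)
      rcases hgap m with h0 | hge
      · rw [h0] at hm
        simp only [zero_sub, norm_neg, Complex.norm_real] at hm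
        rw [Real.norm_of_nonneg (by linarith)] at hm
        linarith
      · have : ‖c m‖ - (ε / 2) ≤ ‖c m - ((ε / 2 : ℝ) : ℂ)‖ := by
          have := norm_sub_norm_le (c m) (((ε / 2 : ℝ) : ℂ))
          rw [Complex.norm_real, Real.norm_of_nonneg (by linarith)] at this
          exact this
        linarith
end
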